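/- Assume 3b ∈ Δ and φ(3b) = 0, and let g : Δ → ℂ be an additive group homomorphism with g(3b) = 0. Then the ℂ-bilinear bracket on the vector space with basis {x_{α,i} : α ∈ Δ, i ∈ ℤ} ∪ {c₋₁} defined by [x_{α,i}, x_{β,j}] = (i(β+b) − j(α+b)) x_{α+β,i+j−1} + B(α,β) x_{α+β,i+j} + δ_{α+β,−3b} δ_{i+j,−1} g(α) c₋₁, with c₋₁ central, is skew-symmetric and satisfies the Jacobi identity; i.e. it defines a Lie algebra structure, a one-dimensional central extension of Coeff(CL(b,φ)). -/

import Mathlib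

/-- `B(α,β) = (1/b)(φ(α)β − φ(β)α + b(φ(α) − φ(β)))`. -/
noncomputable def Bc (b : ℂ) {Δ : AddSubgroup ℂ} (φ : Δ →+ ℂ) (α β : Δ) : ℂ :=
  (1 / b) * (φ α * (β : ℂ) - φ β * (α : ℂ) + b * (φ α - φ β))

/-- Assume `3b ∈ Δ`, `φ(3b) = 0`, and let `g : Δ → ℂ` be an additive
homomorphism with `g(3b) = 0`.  On the free ℂ-vector space with basis
`{x_{α,i} : α ∈ Δ, i ∈ ℤ} ∪ {c₋₁}` (modelled as `((Δ × ℤ) ⊕ Unit) →₀ ℂ`, with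
`x_{α,i} = single (inl (α,i)) 1` and `c₋₁ = single (inr ()) 1`), the bilinear bracket
determined by `[x_{α,i}, x_{β,j}] = (i(β+b) − j(α+b)) x_{α+β,i+j−1} + B(α,β) x_{α+β,i+j}
+ δ_{α+β,−3b} δ_{i+j,−1} g(α) c₋₁` with `c₋₁` central is skew-symmetric and satisfies
the Jacobi identity: it is a one-dimensional central extension of `Coeff(CL(b,φ))`. -/
theorem stmt6 (Δ : AddSubgroup ℂ) (hΔinf : (Δ : Set ℂ).Infinite)
    (b : ℂ) (hb : 2 * b ∉ Δ) (φ : Δ →+ ℂ)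
    (h3 : 3 * b ∈ Δ) (hφ3 : φ ⟨3 * b, h3⟩ = 0)
    (g : Δ →+ ℂ) (hg : g ⟨3 * b, h3⟩ = 0)
    (br : (((Δ × ℤ) ⊕ Unit) →₀ ℂ) →ₗ[ℂ] (((Δ × ℤ) ⊕ Unit) →₀ ℂ) →ₗ[ℂ]
      (((Δ × ℤ) ⊕ Unit) →₀ ℂ))
    (hbr : ∀ (α β : Δ) (i j : ℤ),
      br (Finsupp.single (Sum.inl (α, i)) 1) (Finsupp.single (Sum.inl (β, j)) 1)
        = ((i : ℂ) * ((β : ℂ) + b) - (j : ℂ) * ((α : ℂ) + b)) •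
            Finsupp.single (Sum.inl (α + β, i + j - 1)) (1 : ℂ)
          + Bc b φ α β • Finsupp.single (Sum.inl (α + β, i + j)) (1 : ℂ)
          + (if (α : ℂ) + (β : ℂ) = -(3 * b) ∧ i + j = -1 then g α else 0) •
            Finsupp.single (Sum.inr ()) (1 : ℂ))
    (hcentral : ∀ v : ((Δ × ℤ) ⊕ Unit) →₀ ℂ,
      br (Finsupp.single (Sum.inr ()) 1) v = 0 ∧
      br v (Finsupp.single (Sum.inr ()) 1) = 0) :
    (∀ x y, br x y = - br y x) ∧
    (∀ x y z, br x (br y z) = br (br x y) z + br y (br x z)) := by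
  classical
  have hb0 : b ≠ 0 := by
    intro h
    exact hb (by simpa [h] using Δ.zero_mem)
  set M := (((Δ × ℤ) ⊕ Unit) →₀ ℂ) with hM
  have hcen1 : ∀ v : M, br (Finsupp.single (Sum.inr ()) 1) v = 0 := fun v => (hcentral v).1
  have hcen2 : ∀ v : M, br v (Finsupp.single (Sum.inr ()) 1) = 0 := fun v => (hcentral v).2
  -- normalized form of the bracket on basis vectors
  have hbr2 : ∀ (α β : Δ) (i j : ℤ) (σ : Δ) (m₁ m₂ : ℤ), α + β = σ → i + j - 1 = m₁ →
      i + j = m₂ →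
      br (Finsupp.single (Sum.inl (α, i)) 1) (Finsupp.single (Sum.inl (β, j)) 1)
        = ((i : ℂ) * ((β : ℂ) + b) - (j : ℂ) * ((α : ℂ) + b)) •
            Finsupp.single (Sum.inl (σ, m₁)) (1 : ℂ)
          + Bc b φ α β • Finsupp.single (Sum.inl (σ, m₂)) (1 : ℂ)
          + (if (σ : ℂ) = -(3 * b) ∧ m₂ = -1 then g α else 0) •
            Finsupp.single (Sum.inr ()) (1 : ℂ) := by
    rintro α β i j σ m₁ m₂ rfl rfl rfl
    simpa only [AddSubgroup.coe_add] using hbr α β i j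
  -- if the sum of two elements is -3b (as complex numbers) then g of the sum vanishes
  have hgsum : ∀ σ : Δ, (σ : ℂ) = -(3 * b) → g σ = 0 := by
    intro σ hσ
    have : σ = -⟨3 * b, h3⟩ := by
      apply Subtype.ext
      simpa using hσ
    rw [this, map_neg, hg, neg_zero]
  have hφsum : ∀ σ : Δ, (σ : ℂ) = -(3 * b) → φ σ = 0 := by
    intro σ hσ
    have : σ = -⟨3 * b, h3⟩ := by
      apply Subtype.ext
      simpa using hσ
    rw [this, map_neg, hφ3, neg_zero]
  constructor
  · -- skew-symmetry
    suffices h : ∀ x y : M, br x y + br y x = 0 by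
      intro x y
      have := h x y
      linear_combination (norm := abel) this
    intro x
    induction x using Finsupp.induction_linear with
    | zero => intro y; simp
    | add f g' hf hg' =>
      intro y
      have h1 := hf y
      have h2 := hg' y
      simp only [map_add, LinearMap.add_apply]
      linear_combination (norm := abel) h1 + h2
    | single p c =>
      intro y
      induction y using Finsupp.induction_linear with
      | zero => simp
      | add f g' hf hg' =>
        simp only [map_add, LinearMap.add_apply]
        linear_combination (norm := abel) hf + hg'
      | single q c' =>
        have hpc : (Finsupp.single p c : M) = c • Finsupp.single p 1 := by
          rw [Finsupp.smul_single', mul_one]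
        have hqc : (Finsupp.single q c' : M) = c' • Finsupp.single q 1 := by
          rw [Finsupp.smul_single', mul_one]
        rw [hpc, hqc]
        simp only [map_smul, LinearMap.smul_apply]
        suffices h : br (Finsupp.single p 1) (Finsupp.single q 1)
            + br (Finsupp.single q 1) (Finsupp.single p 1) = 0 by
          simp only [smul_smul, mul_comm c' c, ← smul_add]
          rw [h, smul_zero]
        obtain ⟨α, i⟩ | u := p
        · obtain ⟨β, j⟩ | u := q
          · rw [hbr2 α β i j (α + β) (i + j - 1) (i + j) rfl rfl rfl,
              hbr2 β α j i (α + β) (i + j - 1) (i + j) (add_comm β α) (by omega) (by omega)]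
            by_cases hc : (((α + β : Δ) : ℂ) = -(3 * b) ∧ i + j = -1)
            · have hgab : g α + g β = 0 := by
                rw [← map_add]; exact hgsum _ hc.1
              rw [if_pos hc, if_pos hc]
              match_scalars
              · ring
              · simp only [Bc]; ring
              · linear_combination hgab
            · rw [if_neg hc, if_neg hc]
              match_scalars
              · ring
              · simp only [Bc]; ring
              · ring
          · cases u; simp [hcen1, hcen2]
        · cases u; simp [hcen1, hcen2]
  · -- Jacobi identity
    suffices key : ∀ p q r, br (Finsupp.single p 1) (br (Finsupp.single q 1)
          (Finsupp.single r 1))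
        = br (br (Finsupp.single p 1) (Finsupp.single q 1)) (Finsupp.single r 1)
          + br (Finsupp.single q 1) (br (Finsupp.single p 1) (Finsupp.single r 1)) by
      intro x
      induction x using Finsupp.induction_linear with
      | zero => intro y z; simp
      | add f g' hf hg' =>
        intro y z
        simp only [map_add, LinearMap.add_apply]
        rw [hf, hg']
        abel
      | single p c =>
        intro y
        induction y using Finsupp.induction_linear with
        | zero => intro z; simp
        | add f g' hf hg' =>
          intro z
          simp only [map_add, LinearMap.add_apply]
          rw [hf, hg']
          abel
        | single q c' =>
          intro z
          induction z using Finsupp.induction_linear with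
          | zero => simp
          | add f g' hf hg' =>
            simp only [map_add]
            rw [hf, hg']
            abel
          | single r c'' =>
            have hpc : (Finsupp.single p c : M) = c • Finsupp.single p 1 := by
              rw [Finsupp.smul_single', mul_one]
            have hqc : (Finsupp.single q c' : M) = c' • Finsupp.single q 1 := by
              rw [Finsupp.smul_single', mul_one]
            have hrc : (Finsupp.single r c'' : M) = c'' • Finsupp.single r 1 := by
              rw [Finsupp.smul_single', mul_one]
            rw [hpc, hqc, hrc]
            simp only [map_smul, LinearMap.smul_apply]
            rw [key p q r]
            module
    intro p q r
    obtain ⟨α, i⟩ | u := p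
    · obtain ⟨β, j⟩ | u := q
      · obtain ⟨γ, k⟩ | u := r
        · -- the main case
          rw [hbr2 β γ j k (β + γ) (j + k - 1) (j + k) rfl rfl rfl,
            hbr2 α β i j (α + β) (i + j - 1) (i + j) rfl rfl rfl,
            hbr2 α γ i k (α + γ) (i + k - 1) (i + k) rfl rfl rfl]
          simp only [map_add, map_smul, LinearMap.add_apply, LinearMap.smul_apply,
            hcen1, hcen2, smul_zero, add_zero]
          rw [hbr2 α (β + γ) i (j + k - 1) (α + β + γ) (i + j + k - 2) (i + j + k - 1)
              (add_assoc α β γ).symm (by omega) (by omega),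
            hbr2 α (β + γ) i (j + k) (α + β + γ) (i + j + k - 1) (i + j + k)
              (add_assoc α β γ).symm (by omega) (by omega),
            hbr2 (α + β) γ (i + j - 1) k (α + β + γ) (i + j + k - 2) (i + j + k - 1)
              rfl (by omega) (by omega),
            hbr2 (α + β) γ (i + j) k (α + β + γ) (i + j + k - 1) (i + j + k)
              rfl (by omega) (by omega),
            hbr2 β (α + γ) j (i + k - 1) (α + β + γ) (i + j + k - 2) (i + j + k - 1)
              (by abel) (by omega) (by omega),
            hbr2 β (α + γ) j (i + k) (α + β + γ) (i + j + k - 1) (i + j + k)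
              (by abel) (by omega) (by omega)]
          have hco : ((α + β + γ : Δ) : ℂ) = (α : ℂ) + (β : ℂ) + (γ : ℂ) := by push_cast; ring
          match_scalars
          · push_cast
            ring
          · simp only [Bc, map_add, AddSubgroup.coe_add]
            push_cast
            ring
          · -- central coefficient
            split_ifs with h1 h2 h2
            · exact absurd h2.2 (by have := h1.2; omega)
            · -- N = 0 case
              have hγ : (γ : ℂ) = -(3 * b) - (α : ℂ) - (β : ℂ) := by
                linear_combination h1.1
              have hk : (k : ℂ) = -(i : ℂ) - (j : ℂ) := by
                have hk' : k = -i - j := by have := h1.2; omega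
                rw [hk']; push_cast; ring
              have hgab : g (α + β) = g α + g β := map_add g α β
              rw [hgab, hγ, hk]
              ring
            · -- N = -1 case
              have hγ : (γ : ℂ) = -(3 * b) - (α : ℂ) - (β : ℂ) := by
                linear_combination h2.1
              have hσ : ((α + β + γ : Δ) : ℂ) = -(3 * b) := by
                push_cast
                linear_combination h2.1
              have hφγ : φ γ = -φ α - φ β := by
                have h := hφsum _ hσ
                rw [map_add, map_add] at h
                linear_combination h
              simp only [Bc, map_add, AddSubgroup.coe_add]
              rw [hγ, hφγ]
              ring
            · ring
          · simp only [Bc, map_add, AddSubgroup.coe_add]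
            ring
        · cases u; simp [hcen1, hcen2]
      · cases u; simp [hcen1, hcen2]
    · cases u; simp [hcen1, hcen2]
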